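/- arXiv:2011.03045 — 2 statements merged into one kernel-verified Lean document; each statement's English description precedes it below -/
import Mathlib

section
/- Let E be a complex Hilbert space, ι a type, and for each finite set I ⊆ ι let V(I) be a closed subspace of E with orthogonal projection P_I : E → E onto V(I). Assume that for all finite I, J ⊆ ι and all z ∈ E, P_J(P_I(z)) = P_{I∩J}(z). For z ∈ E and finite I ⊆ ι define z_I := Σ_{K ⊆ I} (−1)^{|I|−|K|} P_K(z). Then for all finite sets I, J ⊆ ι with I \ J ≠ ∅ and all z ∈ E, one has P_J(z_I) = 0. -/
open scoped BigOperators

/-- if the orthogonal projections `P_I` onto closed subspaces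
`V I` of a complex Hilbert space satisfy `P_J ∘ P_I = P_{I∩J}`, and
`z_I := Σ_{K ⊆ I} (−1)^(|I|−|K|) P_K z`, then `P_J (z_I) = 0` whenever
`I \ J ≠ ∅`. -/
theorem proj_component_eq_zero {E : Type*} [NormedAddCommGroup E]
    [InnerProductSpace ℂ E] [CompleteSpace E] {ι : Type*} [DecidableEq ι]
    (V : Finset ι → Submodule ℂ E) [∀ I, CompleteSpace (V I)]
    (hproj : ∀ (I J : Finset ι) (z : E),
      (Submodule.orthogonalProjectionOnto (V J) ((Submodule.orthogonalProjectionOnto (V I) z : E)) : E) =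
        (Submodule.orthogonalProjectionOnto (V (I ∩ J)) z : E))
    (I J : Finset ι) (hIJ : (I \ J).Nonempty) (z : E) :
    (Submodule.orthogonalProjectionOnto (V J)
        (∑ K ∈ I.powerset,
          ((-1 : ℂ) ^ (I.card - K.card)) • (Submodule.orthogonalProjectionOnto (V K) z : E)) : E)
      = 0 := by
  obtain ⟨a, ha⟩ := hIJ
  rw [Finset.mem_sdiff] at ha
  obtain ⟨haI, haJ⟩ := ha
  rw [map_sum, Submodule.coe_sum]
  have hterm : ∀ K : Finset ι,
      ((Submodule.orthogonalProjectionOnto (V J)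
        (((-1 : ℂ) ^ (I.card - K.card)) • (Submodule.orthogonalProjectionOnto (V K) z : E))) : E)
      = ((-1 : ℂ) ^ (I.card - K.card)) • (Submodule.orthogonalProjectionOnto (V (K ∩ J)) z : E) := by
    intro K
    rw [map_smul, Submodule.coe_smul, hproj]
  simp only [hterm]
  refine Finset.sum_involution
    (g := fun K _ => if a ∈ K then K.erase a else insert a K) ?_ ?_ ?_ ?_
  · intro K hK
    rw [Finset.mem_powerset] at hK
    beta_reduce
    by_cases haK : a ∈ K
    · rw [if_pos haK]
      have hle : K.card ≤ I.card := Finset.card_le_card hK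
      have hpos : 1 ≤ K.card := Finset.card_pos.mpr ⟨a, haK⟩
      have h1 : I.card - (K.erase a).card = (I.card - K.card) + 1 := by
        rw [Finset.card_erase_of_mem haK]; omega
      have h2 : (K.erase a) ∩ J = K ∩ J := by
        ext x
        simp only [Finset.mem_inter, Finset.mem_erase]
        constructor
        · rintro ⟨⟨-, h⟩, hJ⟩; exact ⟨h, hJ⟩
        · rintro ⟨hKx, hJ⟩
          exact ⟨⟨fun h => haJ (h ▸ hJ), hKx⟩, hJ⟩
      rw [h1, h2, pow_succ, mul_neg_one, neg_smul, add_neg_cancel]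
    · rw [if_neg haK]
      have hsub : insert a K ⊆ I := Finset.insert_subset haI hK
      have hle : (insert a K).card ≤ I.card := Finset.card_le_card hsub
      have hcard : (insert a K).card = K.card + 1 := Finset.card_insert_of_notMem haK
      have h1 : I.card - K.card = (I.card - (insert a K).card) + 1 := by omega
      have h2 : (insert a K) ∩ J = K ∩ J := by
        ext x
        simp only [Finset.mem_inter, Finset.mem_insert]
        constructor
        · rintro ⟨h | h, hJ⟩
          · exact absurd (h ▸ hJ) haJ
          · exact ⟨h, hJ⟩
        · rintro ⟨h, hJ⟩; exact ⟨Or.inr h, hJ⟩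
      rw [h1, h2, pow_succ, mul_neg_one, neg_smul, neg_add_cancel]
  · intro K hK hne
    beta_reduce
    by_cases haK : a ∈ K
    · rw [if_pos haK]
      intro h
      exact (Finset.notMem_erase a K) (h.symm ▸ haK)
    · rw [if_neg haK]
      intro h
      exact haK (h ▸ Finset.mem_insert_self a K :)
  · intro K hK
    rw [Finset.mem_powerset] at hK ⊢
    beta_reduce
    by_cases haK : a ∈ K
    · rw [if_pos haK]
      exact (Finset.erase_subset a K).trans hK
    · rw [if_neg haK]
      exact Finset.insert_subset haI hK
  · intro K hK
    beta_reduce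
    by_cases haK : a ∈ K
    · simp only [if_pos haK]
      rw [if_neg (Finset.notMem_erase a K), Finset.insert_erase haK]
    · simp only [if_neg haK]
      rw [if_pos (Finset.mem_insert_self a K), Finset.erase_insert haK]
end

section
/- Let n ≥ 1, let E be a complex Hilbert space, and for each subset I ⊆ {1, …, n} let V(I) be a closed subspace of E with orthogonal projection P_I : E → E onto V(I). Assume that for all I, J ⊆ {1, …, n} and all w ∈ E, P_J(P_I(w)) = P_{I∩J}(w). Let z ∈ E satisfy z ∈ V({1, …, n}) and P_∅(z) = 0, and for I ⊆ {1, …, n} define z_I := Σ_{K ⊆ I} (−1)^{|I|−|K|} P_K(z); assume moreover that ‖z_I‖ = ‖z_J‖ whenever |I| = |J|. Then for every I ⊆ {1, …, n}, ‖P_I(z)‖² ≤ (|I|/n)·‖z‖². -/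
open scoped BigOperators InnerProductSpace

lemma aux_pythagoras {E : Type*} [NormedAddCommGroup E] [InnerProductSpace ℂ E]
    {ι : Type*} (s : Finset ι) (v : ι → E)
    (h : ∀ i ∈ s, ∀ j ∈ s, i ≠ j → ⟪v i, v j⟫_ℂ = 0) :
    ‖∑ i ∈ s, v i‖ ^ 2 = ∑ i ∈ s, ‖v i‖ ^ 2 := by
  have : ⟪∑ i ∈ s, v i, ∑ j ∈ s, v j⟫_ℂ = ∑ i ∈ s, ((‖v i‖ : ℂ)) ^ 2 := by
    rw [sum_inner]
    refine Finset.sum_congr rfl fun i hi => ?_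
    rw [inner_sum]
    rw [Finset.sum_eq_single_of_mem i hi (fun j hj hji => h i hi j hj (Ne.symm hji))]
    rw [inner_self_eq_norm_sq_to_K]
    norm_cast
  have h2 := congrArg Complex.re this
  rw [← inner_self_eq_norm_sq (𝕜 := ℂ)]
  exact_mod_cast h2

lemma aux_choose {n m k : ℕ} (hm : m ≤ n) (hk : 1 ≤ k) :
    n * m.choose k ≤ m * n.choose k := by
  obtain ⟨k, rfl⟩ := Nat.exists_eq_add_of_le hk
  rw [Nat.add_comm 1 k]
  rcases Nat.eq_zero_or_pos m with rfl | hm1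
  · have : Nat.choose 0 (k + 1) = 0 := Nat.choose_eq_zero_of_lt (by omega)
    simp [this]
  have hn1 : 0 < n := lt_of_lt_of_le hm1 hm
  have key : (m - 1).choose k ≤ (n - 1).choose k := Nat.choose_le_choose k (by omega)
  have h1 : m * (m - 1).choose k = m.choose (k + 1) * (k + 1) := by
    have := Nat.add_one_mul_choose_eq (m - 1) k
    rw [Nat.sub_add_cancel hm1] at this
    exact this
  have h2 : n * (n - 1).choose k = n.choose (k + 1) * (k + 1) := by
    have := Nat.add_one_mul_choose_eq (n - 1) k
    rw [Nat.sub_add_cancel hn1] at this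
    exact this
  have hmul : (n * m.choose (k + 1)) * (k + 1) ≤ (m * n.choose (k + 1)) * (k + 1) := by
    calc (n * m.choose (k + 1)) * (k + 1) = n * (m.choose (k + 1) * (k + 1)) := by ring
    _ = n * (m * (m - 1).choose k) := by rw [← h1]
    _ = (n * m) * (m - 1).choose k := by ring
    _ ≤ (n * m) * (n - 1).choose k := Nat.mul_le_mul_left _ key
    _ = m * (n * (n - 1).choose k) := by ring
    _ = m * (n.choose (k + 1) * (k + 1)) := by rw [h2]
    _ = (m * n.choose (k + 1)) * (k + 1) := by ring
  exact Nat.le_of_mul_le_mul_right hmul (by omega)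


/-- with commuting projections indexed by subsets of `{1,…,n}`,
if `z ∈ V(univ)`, `P_∅ z = 0`, and the Efron–Stein components
`z_I := Σ_{K ⊆ I} (−1)^(|I|−|K|) P_K z` satisfy `‖z_I‖ = ‖z_J‖` whenever
`|I| = |J|`, then `‖P_I z‖² ≤ (|I|/n)·‖z‖²`. -/
theorem norm_proj_le {E : Type*} [NormedAddCommGroup E]
    [InnerProductSpace ℂ E] [CompleteSpace E] (n : ℕ) (hn : 1 ≤ n)
    (V : Finset (Fin n) → Submodule ℂ E) [∀ I, CompleteSpace (V I)]
    (hproj : ∀ (I J : Finset (Fin n)) (w : E),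
      (Submodule.orthogonalProjectionOnto (V J) ((Submodule.orthogonalProjectionOnto (V I) w : E)) : E) =
        (Submodule.orthogonalProjectionOnto (V (I ∩ J)) w : E))
    (z : E) (hz : z ∈ V Finset.univ)
    (hz0 : (Submodule.orthogonalProjectionOnto (V ∅) z : E) = 0)
    (zc : Finset (Fin n) → E)
    (hzc : ∀ I : Finset (Fin n),
      zc I = ∑ K ∈ I.powerset,
        ((-1 : ℂ) ^ (I.card - K.card)) • (Submodule.orthogonalProjectionOnto (V K) z : E))
    (hnorm : ∀ I J : Finset (Fin n), I.card = J.card → ‖zc I‖ = ‖zc J‖)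
    (I : Finset (Fin n)) :
    ‖(Submodule.orthogonalProjectionOnto (V I) z : E)‖ ^ 2 ≤ ((I.card : ℝ) / n) * ‖z‖ ^ 2 := by
  classical
  set P : Finset (Fin n) → E := fun K => (Submodule.orthogonalProjectionOnto (V K) z : E) with hPdef
  -- sign-normalized form of the components
  have hzc' : ∀ A : Finset (Fin n), zc A =
      ∑ K ∈ A.powerset, (((-1 : ℂ) ^ A.card * (-1 : ℂ) ^ K.card)) • P K := by
    intro A
    rw [hzc A]
    refine Finset.sum_congr rfl fun K hK => ?_
    have hKA : K.card ≤ A.card := Finset.card_le_card (Finset.mem_powerset.mp hK)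
    congr 1
    obtain ⟨c, hc⟩ : ∃ c, A.card = K.card + c := ⟨A.card - K.card, by omega⟩
    rw [hc, Nat.add_sub_cancel_left, pow_add]
    rw [mul_right_comm, ← pow_add, ← two_mul, pow_mul, neg_one_sq, one_pow, one_mul]
  -- the inner products of projections
  have hg : ∀ K L : Finset (Fin n), ⟪P K, P L⟫_ℂ = ⟪z, P (L ∩ K)⟫_ℂ := by
    intro K L
    rw [hPdef]
    simp only
    erw [Submodule.inner_starProjection_left_eq_right]
    exact congrArg _ (hproj L K z)
  -- expansion of ⟪zc A, zc B⟫
  have hinner : ∀ A B : Finset (Fin n), ⟪zc A, zc B⟫_ℂ =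
      ∑ L ∈ B.powerset, ∑ K ∈ A.powerset,
        (((-1 : ℂ) ^ A.card * (-1 : ℂ) ^ B.card * (-1 : ℂ) ^ L.card) *
          ((-1 : ℂ) ^ K.card * ⟪z, P (L ∩ K)⟫_ℂ)) := by
    intro A B
    rw [hzc' A, hzc' B, sum_inner]
    simp only [inner_sum, inner_smul_left, inner_smul_right, map_mul, map_pow, map_neg,
      map_one]
    rw [Finset.sum_comm]
    refine Finset.sum_congr rfl fun L hL => Finset.sum_congr rfl fun K hK => ?_
    rw [hg K L]
    ring
  -- vanishing of the K-sum when some i ∈ A is outside L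
  have hvanish : ∀ (A : Finset (Fin n)) (i : Fin n), i ∈ A → ∀ L : Finset (Fin n), i ∉ L →
      ∑ K ∈ A.powerset, ((-1 : ℂ) ^ K.card * ⟪z, P (L ∩ K)⟫_ℂ) = 0 := by
    intro A i hiA L hiL
    have h1 : insert i (A.erase i) = A := Finset.insert_erase hiA
    rw [← h1, Finset.sum_powerset_insert (Finset.notMem_erase i A)]
    have h2 : ∀ t ∈ (A.erase i).powerset,
        ((-1 : ℂ)) ^ (insert i t).card * ⟪z, P (L ∩ insert i t)⟫_ℂ =
          -(((-1 : ℂ)) ^ t.card * ⟪z, P (L ∩ t)⟫_ℂ) := by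
      intro t ht
      have hit : i ∉ t := fun h => Finset.notMem_erase i A (Finset.mem_powerset.mp ht h)
      rw [Finset.card_insert_of_notMem hit, Finset.inter_insert_of_notMem hiL, pow_succ]
      ring
    rw [Finset.sum_congr rfl h2, Finset.sum_neg_distrib]
    exact add_neg_cancel _
  -- left-orthogonality
  have horthL : ∀ A B : Finset (Fin n), (∃ i, i ∈ A ∧ i ∉ B) → ⟪zc A, zc B⟫_ℂ = 0 := by
    intro A B ⟨i, hiA, hiB⟩
    rw [hinner A B]
    refine Finset.sum_eq_zero fun L hL => ?_
    have hiL : i ∉ L := fun h => hiB (Finset.mem_powerset.mp hL h)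
    rw [← Finset.mul_sum, hvanish A i hiA L hiL, mul_zero]
  -- full orthogonality
  have horth : ∀ A B : Finset (Fin n), A ≠ B → ⟪zc A, zc B⟫_ℂ = 0 := by
    intro A B hAB
    by_cases h : ∃ i, i ∈ A ∧ i ∉ B
    · exact horthL A B h
    · push_neg at h
      have hBA : ∃ j, j ∈ B ∧ j ∉ A := by
        by_contra hc
        push_neg at hc
        exact hAB (Finset.Subset.antisymm h hc)
      rw [← inner_conj_symm, horthL B A hBA, map_zero]
  -- Möbius inversion: P A = ∑_{K ⊆ A} zc K
  have hinv : ∀ A : Finset (Fin n), P A = ∑ K ∈ A.powerset, zc K := by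
    intro A
    have hcond : ∀ (K L : Finset (Fin n)), K ∈ A.powerset ∧ L ∈ K.powerset ↔
        K ∈ A.powerset.filter (fun K => L ⊆ K) ∧ L ∈ A.powerset := by
      intro K L
      simp only [Finset.mem_powerset, Finset.mem_filter]
      constructor
      · rintro ⟨h1, h2⟩
        exact ⟨⟨h1, h2⟩, h2.trans h1⟩
      · rintro ⟨⟨h1, h2⟩, _⟩
        exact ⟨h1, h2⟩
    have step1 : ∑ K ∈ A.powerset, zc K =
        ∑ L ∈ A.powerset, (∑ K ∈ A.powerset.filter (fun K => L ⊆ K),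
          ((-1 : ℂ)) ^ K.card) • (((-1 : ℂ)) ^ L.card • P L) := by
      rw [Finset.sum_congr rfl (fun K (_ : K ∈ A.powerset) => hzc' K)]
      rw [Finset.sum_comm' hcond]
      refine Finset.sum_congr rfl fun L hL => ?_
      rw [Finset.sum_smul]
      exact Finset.sum_congr rfl fun K hK => by rw [smul_smul]
    have step2 : ∀ L ∈ A.powerset,
        (∑ K ∈ A.powerset.filter (fun K => L ⊆ K), ((-1 : ℂ)) ^ K.card) =
          if L = A then ((-1 : ℂ)) ^ A.card else 0 := by
      intro L hL
      have hLA : L ⊆ A := Finset.mem_powerset.mp hL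
      by_cases hLeq : L = A
      · subst hLeq
        have : L.powerset.filter (fun K => L ⊆ K) = {L} := by
          ext K
          simp only [Finset.mem_filter, Finset.mem_powerset, Finset.mem_singleton]
          constructor
          · rintro ⟨h1, h2⟩
            exact (Finset.Subset.antisymm h1 h2).symm ▸ rfl
          · rintro rfl
            exact ⟨Finset.Subset.refl _, Finset.Subset.refl _⟩
        rw [this, Finset.sum_singleton, if_pos rfl]

      · rw [if_neg hLeq]
        have hbij : ∑ K ∈ A.powerset.filter (fun K => L ⊆ K), ((-1 : ℂ)) ^ K.card =
            ∑ M ∈ (A \ L).powerset, ((-1 : ℂ)) ^ (L.card + M.card) := by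
          refine Finset.sum_nbij' (fun K => K \ L) (fun M => L ∪ M) ?_ ?_ ?_ ?_ ?_
          · intro K hK
            simp only [Finset.mem_filter, Finset.mem_powerset] at hK ⊢
            exact Finset.sdiff_subset_sdiff hK.1 (Finset.Subset.refl _)
          · intro M hM
            simp only [Finset.mem_powerset] at hM
            simp only [Finset.mem_filter, Finset.mem_powerset]
            exact ⟨Finset.union_subset hLA (hM.trans (Finset.sdiff_subset)),
              Finset.subset_union_left⟩
          · intro K hK
            simp only [Finset.mem_filter] at hK
            exact Finset.union_sdiff_of_subset hK.2
          · intro M hM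
            simp only [Finset.mem_powerset] at hM
            exact Finset.union_sdiff_cancel_left
              (Finset.disjoint_of_subset_right hM Finset.disjoint_sdiff)
          · intro K hK
            simp only [Finset.mem_filter, Finset.mem_powerset] at hK
            congr 1
            show K.card = L.card + (K \ L).card
            have := Finset.card_sdiff_of_subset hK.2
            have hle : L.card ≤ K.card := Finset.card_le_card hK.2
            omega
        rw [hbij]
        have hne : (A \ L).Nonempty := by
          rw [Finset.sdiff_nonempty]
          intro hcon
          exact hLeq (Finset.Subset.antisymm hLA hcon)
        have hzint : (∑ M ∈ (A \ L).powerset, ((-1 : ℤ)) ^ M.card) = 0 :=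
          Finset.sum_powerset_neg_one_pow_card_of_nonempty hne
        have hzc2 : (∑ M ∈ (A \ L).powerset, ((-1 : ℂ)) ^ M.card) = 0 := by
          exact_mod_cast hzint
        calc ∑ M ∈ (A \ L).powerset, ((-1 : ℂ)) ^ (L.card + M.card)
            = ((-1 : ℂ)) ^ L.card * ∑ M ∈ (A \ L).powerset, ((-1 : ℂ)) ^ M.card := by
              rw [Finset.mul_sum]
              exact Finset.sum_congr rfl fun M _ => by rw [pow_add]
          _ = 0 := by rw [hzc2, mul_zero]
    rw [step1, Finset.sum_congr rfl fun L hL => by rw [step2 L hL]]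
    rw [Finset.sum_eq_single_of_mem A (Finset.mem_powerset_self A)
      (fun L _ hLA => by rw [if_neg hLA, zero_smul])]
    rw [if_pos rfl, smul_smul, ← pow_add, ← two_mul, pow_mul, neg_one_sq, one_pow, one_smul]
  -- Pythagoras
  have hpyth : ∀ A : Finset (Fin n), ‖P A‖ ^ 2 = ∑ K ∈ A.powerset, ‖zc K‖ ^ 2 := by
    intro A
    rw [hinv A]
    exact aux_pythagoras _ _ fun i _ j _ hij => horth i j hij
  -- canonical sets of each cardinality and the norm function
  set T : ℕ → Finset (Fin n) := fun k =>
    (Finset.range (min k n)).attachFin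
      (fun m hm => lt_of_lt_of_le (Finset.mem_range.mp hm) (min_le_right _ _)) with hTdef
  have hT : ∀ k, k ≤ n → (T k).card = k := by
    intro k hk
    rw [hTdef]
    simp [Finset.card_attachFin, Nat.min_eq_left hk]
  set f : ℕ → ℝ := fun k => ‖zc (T k)‖ ^ 2 with hfdef
  have hf : ∀ K : Finset (Fin n), ‖zc K‖ ^ 2 = f K.card := by
    intro K
    have hKn : K.card ≤ n := le_trans (Finset.card_le_univ K) (by simp)
    rw [hfdef]
    simp only
    rw [hnorm K (T K.card) ((hT K.card hKn).symm)]
  -- grouping by cardinality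
  have hgroup : ∀ A : Finset (Fin n), ‖P A‖ ^ 2 =
      ∑ k ∈ Finset.range (A.card + 1), (A.card.choose k : ℝ) * f k := by
    intro A
    rw [hpyth A, Finset.sum_powerset]
    refine Finset.sum_congr rfl fun j hj => ?_
    have : ∀ K ∈ Finset.powersetCard j A, ‖zc K‖ ^ 2 = f j := by
      intro K hK
      rw [hf K, (Finset.mem_powersetCard.mp hK).2]
    rw [Finset.sum_congr rfl this, Finset.sum_const, Finset.card_powersetCard,
      nsmul_eq_mul]
  -- f 0 = 0
  have hf0 : f 0 = 0 := by
    have hT0 : T 0 = ∅ := by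
      rw [hTdef]; ext x; simp [Finset.mem_attachFin]
    have hzce : zc ∅ = 0 := by
      rw [hzc ∅]
      simp [show (V ∅).starProjection z = 0 from hz0]
    rw [hfdef]
    simp only
    rw [hT0, hzce]
    simp
  -- f k ≥ 0
  have hfnn : ∀ k, 0 ≤ f k := fun k => by rw [hfdef]; positivity
  -- the norm of z
  have hzn : ‖z‖ ^ 2 = ∑ k ∈ Finset.range (n + 1), (n.choose k : ℝ) * f k := by
    have h1 : P Finset.univ = z := by
      rw [hPdef]; exact Submodule.starProjection_eq_self_iff.mpr hz
    have := hgroup Finset.univ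
    rw [h1] at this
    simpa using this
  -- final computation
  have hm : I.card ≤ n := le_trans (Finset.card_le_univ I) (by simp)
  rw [hgroup I, hzn]
  have hn' : (0 : ℝ) < n := by exact_mod_cast Nat.lt_of_lt_of_le Nat.zero_lt_one hn
  calc ∑ k ∈ Finset.range (I.card + 1), (I.card.choose k : ℝ) * f k
      ≤ ∑ k ∈ Finset.range (I.card + 1), (I.card : ℝ) / n * ((n.choose k : ℝ) * f k) := by
        refine Finset.sum_le_sum fun k _ => ?_
        rcases Nat.eq_zero_or_pos k with rfl | hk1
        · simp [hf0]
        · have h1 : (n : ℝ) * (I.card.choose k : ℝ) ≤ (I.card : ℝ) * (n.choose k : ℝ) := by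
            exact_mod_cast aux_choose hm hk1
          have h2 : (I.card.choose k : ℝ) ≤ (I.card : ℝ) / n * (n.choose k : ℝ) := by
            rw [div_mul_eq_mul_div, le_div_iff₀ hn']
            nlinarith [h1]
          calc (I.card.choose k : ℝ) * f k
              ≤ ((I.card : ℝ) / n * (n.choose k : ℝ)) * f k :=
                mul_le_mul_of_nonneg_right h2 (hfnn k)
            _ = (I.card : ℝ) / n * ((n.choose k : ℝ) * f k) := by ring
    _ = (I.card : ℝ) / n * ∑ k ∈ Finset.range (I.card + 1), (n.choose k : ℝ) * f k := by
        rw [Finset.mul_sum]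
    _ ≤ (I.card : ℝ) / n * ∑ k ∈ Finset.range (n + 1), (n.choose k : ℝ) * f k := by
        refine mul_le_mul_of_nonneg_left ?_ (div_nonneg (Nat.cast_nonneg _) (Nat.cast_nonneg _))
        refine Finset.sum_le_sum_of_subset_of_nonneg
          (Finset.range_subset_range.mpr (by omega)) fun k _ _ => ?_
        exact mul_nonneg (by positivity) (hfnn k)
end
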